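/- arXiv:2308.07455 — 2 statements merged into one kernel-verified Lean document; each statement's English description precedes it below -/
import Mathlib

section
/- There are exactly $839946240$ strongly magic quad squares using the cards from the standard EvenQuads deck of $64$ cards (the case $n = 6$); equivalently, $64 \cdot 63 \cdot 62 \cdot 60 \cdot 56 = 839946240$ is the number of strongly magic quad squares over $(\mathbb{Z}/2)^6$. -/
/-- A card in the EvenQuads-`2^n` deck, modeled as a vector in `(ℤ/2)^n`. -/
abbrev Deck (n : ℕ) := Fin n → ZMod 2

/-- Identification of the integer `k` (via binary representation) with a card. -/
def numToCard (n k : ℕ) : Deck n := fun i => if Nat.testBit k i.val then 1 else 0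

/-- A quad square is semimagic if every row and every column sums to zero. -/
def IsSemimagic {n : ℕ} (M : Fin 4 × Fin 4 → Deck n) : Prop :=
  (∀ i : Fin 4, ∑ j : Fin 4, M (i, j) = 0) ∧ (∀ j : Fin 4, ∑ i : Fin 4, M (i, j) = 0)

/-- A quad square is magic if it is semimagic and both diagonals sum to zero. -/
def IsMagic {n : ℕ} (M : Fin 4 × Fin 4 → Deck n) : Prop :=
  IsSemimagic M ∧ (∑ i : Fin 4, M (i, i) = 0) ∧ (∑ i : Fin 4, M (i, 3 - i) = 0)

/-- Identification of `Fin 4` with `(ℤ/2)^2` via binary representation. -/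
def finToVec (a : Fin 4) : Fin 2 → ZMod 2 := fun i => if Nat.testBit a.val i.val then 1 else 0

/-- A grid position as an element of `(ℤ/2)^2 × (ℤ/2)^2 ≅ (ℤ/2)^4`. -/
def posVec (p : Fin 4 × Fin 4) : (Fin 2 → ZMod 2) × (Fin 2 → ZMod 2) :=
  (finToVec p.1, finToVec p.2)

/-- A quad square is strongly magic if any four pairwise distinct positions summing to
zero in `(ℤ/2)^4` carry cards summing to zero. -/
def IsStronglyMagic {n : ℕ} (M : Fin 4 × Fin 4 → Deck n) : Prop :=
  ∀ p1 p2 p3 p4 : Fin 4 × Fin 4,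
    p1 ≠ p2 → p1 ≠ p3 → p1 ≠ p4 → p2 ≠ p3 → p2 ≠ p4 → p3 ≠ p4 →
    posVec p1 + posVec p2 + posVec p3 + posVec p4 = 0 →
    M p1 + M p2 + M p3 + M p4 = 0

/-- A quad square is of type C if its first row is `0,1,2,3` and
its first column is `0,4,8,12`. -/
def IsTypeC {n : ℕ} (M : Fin 4 × Fin 4 → Deck n) : Prop :=
  (∀ j : Fin 4, M (0, j) = numToCard n j.val) ∧
  (∀ i : Fin 4, M (i, 0) = numToCard n (4 * i.val))

-- auxiliary material
abbrev QuadV := (Fin 2 → ZMod 2) × (Fin 2 → ZMod 2)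

lemma qadd_self {M : Type*} [AddCommMonoid M] [Module (ZMod 2) M] (x : M) : x + x = 0 := by
  rw [← two_smul (ZMod 2) x, show (2 : ZMod 2) = 0 by decide, zero_smul]

lemma qeq_of_add_eq_zero {M : Type*} [AddCommGroup M] [Module (ZMod 2) M] {x y : M}
    (h : x + y = 0) : x = y := by
  have := eq_neg_of_add_eq_zero_left h
  rwa [neg_eq_of_add_eq_zero_left (qadd_self y)] at this

lemma posVec_bijective : Function.Bijective posVec := by
  constructor
  · decide
  · decide

noncomputable def posEquiv : (Fin 4 × Fin 4) ≃ QuadV := Equiv.ofBijective posVec posVec_bijective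

lemma qadd_eq_zero_iff {a b : QuadV} : a + b = 0 ↔ a = b :=
  ⟨qeq_of_add_eq_zero, fun h => h ▸ qadd_self b⟩

/-- The main structural equivalence. -/
noncomputable def magicEquiv :
    {M : Fin 4 × Fin 4 → Deck 6 // Function.Injective M ∧ IsStronglyMagic M} ≃
      Deck 6 × {f : QuadV →ₗ[ZMod 2] Deck 6 // Function.Injective f} where
  toFun := fun ⟨M, hinj, hsm⟩ =>
    have hN : ∀ a b : QuadV, M (posEquiv.symm (a + b)) + M (posEquiv.symm 0) =
        (M (posEquiv.symm a) + M (posEquiv.symm 0)) +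
        (M (posEquiv.symm b) + M (posEquiv.symm 0)) := by
      intro a b
      rcases eq_or_ne a 0 with rfl | ha0
      · rw [zero_add, qadd_self (M (posEquiv.symm 0)), zero_add]
      rcases eq_or_ne b 0 with rfl | hb0
      · rw [add_zero, qadd_self (M (posEquiv.symm 0)), add_zero]
      rcases eq_or_ne a b with rfl | hab
      · rw [qadd_self a, qadd_self (M (posEquiv.symm a) + M (posEquiv.symm 0))]
        exact qadd_self _
      · have hab0 : a + b ≠ 0 := fun h => hab (qeq_of_add_eq_zero h)
        have haab : a ≠ a + b := fun h => hb0 (by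
          have := congrArg (a + ·) h
          rwa [← add_assoc, qadd_self a, zero_add, eq_comm] at this)
        have hbab : b ≠ a + b := fun h => ha0 (by
          have := congrArg (b + ·) h
          rw [add_comm a b, ← add_assoc, qadd_self b, zero_add, eq_comm] at this
          exact this)
        have hs := hsm (posEquiv.symm 0) (posEquiv.symm a) (posEquiv.symm b)
          (posEquiv.symm (a + b))
          (fun h => ha0 (posEquiv.symm.injective h).symm)
          (fun h => hb0 (posEquiv.symm.injective h).symm)
          (fun h => hab0 (posEquiv.symm.injective h).symm)
          (fun h => hab (posEquiv.symm.injective h))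
          (fun h => haab (posEquiv.symm.injective h))
          (fun h => hbab (posEquiv.symm.injective h))
          (by
            have : ∀ v : QuadV, posVec (posEquiv.symm v) = v := fun v =>
              posEquiv.apply_symm_apply v
            rw [this, this, this, this, zero_add]
            exact qadd_self _)
        apply qeq_of_add_eq_zero
        calc (M (posEquiv.symm (a+b)) + M (posEquiv.symm 0)) +
              ((M (posEquiv.symm a) + M (posEquiv.symm 0)) +
               (M (posEquiv.symm b) + M (posEquiv.symm 0)))
            = (M (posEquiv.symm 0) + M (posEquiv.symm a) + M (posEquiv.symm b) +
                M (posEquiv.symm (a+b))) +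
              (M (posEquiv.symm 0) + M (posEquiv.symm 0)) := by abel
          _ = 0 := by rw [hs, qadd_self (M (posEquiv.symm 0)), add_zero]
    ⟨M (posEquiv.symm 0),
      (AddMonoidHom.mk' (fun v => M (posEquiv.symm v) + M (posEquiv.symm 0))
        (fun a b => hN a b)).toZModLinearMap 2,
      by
        intro x y hxy
        have hxy' : M (posEquiv.symm x) + M (posEquiv.symm 0) =
            M (posEquiv.symm y) + M (posEquiv.symm 0) := hxy
        exact posEquiv.symm.injective (hinj (add_right_cancel hxy'))⟩
  invFun := fun ⟨c, f, hf⟩ =>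
    ⟨fun p => c + f (posEquiv p), by
      constructor
      · intro p q hpq
        simp only [add_right_inj] at hpq
        exact posEquiv.injective (hf hpq)
      · intro p1 p2 p3 p4 h12 h13 h14 h23 h24 h34 hsum
        have hv : posEquiv p1 + posEquiv p2 + posEquiv p3 + posEquiv p4 = 0 := hsum
        calc (c + f (posEquiv p1)) + (c + f (posEquiv p2)) + (c + f (posEquiv p3)) +
              (c + f (posEquiv p4))
            = ((c + c) + (c + c)) +
              f (posEquiv p1 + posEquiv p2 + posEquiv p3 + posEquiv p4) := by
              rw [map_add, map_add, map_add]; abel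
          _ = 0 := by rw [hv, map_zero, qadd_self c, add_zero, add_zero]⟩
  left_inv := by
    rintro ⟨M, hinj, hsm⟩
    refine Subtype.ext (funext fun p => ?_)
    show M (posEquiv.symm 0) + (M (posEquiv.symm (posEquiv p)) + M (posEquiv.symm 0)) = M p
    rw [posEquiv.symm_apply_apply]
    calc M (posEquiv.symm 0) + (M p + M (posEquiv.symm 0))
        = (M (posEquiv.symm 0) + M (posEquiv.symm 0)) + M p := by abel
      _ = M p := by rw [qadd_self (M (posEquiv.symm 0)), zero_add]
  right_inv := by
    rintro ⟨c, f, hf⟩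
    have h0 : (fun p => c + f (posEquiv p)) (posEquiv.symm 0) = c := by
      simp only [posEquiv.apply_symm_apply, map_zero, add_zero]
    refine Prod.ext h0 (Subtype.ext (LinearMap.ext fun v => ?_))
    show (c + f (posEquiv (posEquiv.symm v))) + (c + f (posEquiv (posEquiv.symm 0))) = f v
    rw [posEquiv.apply_symm_apply, posEquiv.apply_symm_apply, map_zero, add_zero]
    calc (c + f v) + c = (c + c) + f v := by abel
      _ = f v := by rw [qadd_self c, zero_add]

noncomputable def quadBasis : Module.Basis (Fin 4) (ZMod 2) QuadV :=
  ((Pi.basisFun (ZMod 2) (Fin 2)).prod (Pi.basisFun (ZMod 2) (Fin 2))).reindex finSumFinEquiv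

noncomputable def injEquivLI :
    {f : QuadV →ₗ[ZMod 2] Deck 6 // Function.Injective f} ≃
      {s : Fin 4 → Deck 6 // LinearIndependent (ZMod 2) s} where
  toFun := fun ⟨f, hf⟩ =>
    ⟨f ∘ quadBasis, quadBasis.linearIndependent.map' f (LinearMap.ker_eq_bot.2 hf)⟩
  invFun := fun ⟨s, hs⟩ =>
    ⟨quadBasis.constr (ZMod 2) s, by
      rw [← LinearMap.ker_eq_bot, LinearMap.ker_eq_bot']
      intro x hx
      have hx' : (quadBasis.constr (ZMod 2) s) (∑ i, quadBasis.repr x i • quadBasis i) = 0 := by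
        rw [quadBasis.sum_repr]; exact hx
      rw [map_sum] at hx'
      simp only [map_smul, Module.Basis.constr_basis] at hx'
      have hz := (Fintype.linearIndependent_iff.1 hs) _ hx'
      rw [← quadBasis.sum_repr x]
      simp [hz]⟩
  left_inv := by
    rintro ⟨f, hf⟩
    exact Subtype.ext (quadBasis.ext fun i => by simp)
  right_inv := by
    rintro ⟨s, hs⟩
    exact Subtype.ext (funext fun i => by simp)

theorem stronglyMagic_count_deck64 :
    Nat.card {M : Fin 4 × Fin 4 → Deck 6 //
      Function.Injective M ∧ IsStronglyMagic M} = 839946240 := by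
  rw [Nat.card_congr (magicEquiv.trans (Equiv.prodCongrRight fun _ => injEquivLI)),
    Nat.card_prod]
  have h1 : Nat.card (Deck 6) = 64 := by
    rw [Nat.card_eq_fintype_card]
    simp [Fintype.card_fun]
  have h2 : Nat.card {s : Fin 4 → Deck 6 // LinearIndependent (ZMod 2) s} =
      13124160 := by
    have hr : Module.finrank (ZMod 2) (Deck 6) = 6 := Module.finrank_fin_fun _
    rw [card_linearIndependent (by rw [hr]; norm_num), hr]
    decide
  rw [h1, h2]
end

section
/- Let $n \ge 4$. Every semimagic quad square $C$ of type C over the EvenQuads-$2^n$ deck can be written uniquely as an entrywise sum $C = A + B$ in $(\mathbb{Z}/2)^n$, where $A$ is a square of type A and $B$ is a square of type B. -/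
/-- The integer corresponding to a card via binary representation. -/
def cardToNat {n : ℕ} (c : Deck n) : ℕ := ∑ i : Fin n, (c i).val * 2 ^ i.val

/-- A square of type A: all entries correspond to integers less than 16, first row
`0,1,2,3`, first column `0,4,8,12`, all rows and columns sum to zero. -/
def IsTypeA {n : ℕ} (A : Fin 4 × Fin 4 → Deck n) : Prop :=
  (∀ p : Fin 4 × Fin 4, cardToNat (A p) < 16) ∧
  (∀ j : Fin 4, A (0, j) = numToCard n j.val) ∧
  (∀ i : Fin 4, A (i, 0) = numToCard n (4 * i.val)) ∧
  (∀ i : Fin 4, ∑ j : Fin 4, A (i, j) = 0) ∧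
  (∀ j : Fin 4, ∑ i : Fin 4, A (i, j) = 0)

/-- A square of type B: all entries correspond to integers divisible by 16, first row
and first column identically zero, all rows and columns sum to zero. -/
def IsTypeB {n : ℕ} (B : Fin 4 × Fin 4 → Deck n) : Prop :=
  (∀ p : Fin 4 × Fin 4, 16 ∣ cardToNat (B p)) ∧
  (∀ j : Fin 4, B (0, j) = 0) ∧
  (∀ i : Fin 4, B (i, 0) = 0) ∧
  (∀ i : Fin 4, ∑ j : Fin 4, B (i, j) = 0) ∧
  (∀ j : Fin 4, ∑ i : Fin 4, B (i, j) = 0)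


lemma zmod2_val_le_one (a : ZMod 2) : a.val ≤ 1 := Nat.lt_succ_iff.mp (ZMod.val_lt a)

lemma low_sum_le {n : ℕ} (c : Deck n) :
    ∑ i ∈ Finset.univ.filter (fun i : Fin n => i.val < 4), (c i).val * 2 ^ i.val ≤ 15 := by
  have h1 : ∑ i ∈ Finset.univ.filter (fun i : Fin n => i.val < 4), (c i).val * 2 ^ i.val
      ≤ ∑ i ∈ Finset.univ.filter (fun i : Fin n => i.val < 4), 2 ^ i.val := by
    apply Finset.sum_le_sum
    intro i _
    calc (c i).val * 2 ^ i.val ≤ 1 * 2 ^ i.val :=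
          Nat.mul_le_mul_right _ (zmod2_val_le_one _)
      _ = 2 ^ i.val := one_mul _
  have h2 : ∑ i ∈ Finset.univ.filter (fun i : Fin n => i.val < 4), 2 ^ i.val
      = ∑ k ∈ (Finset.univ.filter (fun i : Fin n => i.val < 4)).image Fin.val, 2 ^ k := by
    rw [Finset.sum_image]
    intro x _ y _ h
    exact Fin.val_injective h
  have h3 : (Finset.univ.filter (fun i : Fin n => i.val < 4)).image Fin.val ⊆ Finset.range 4 := by
    intro k hk
    simp only [Finset.mem_image, Finset.mem_filter] at hk
    obtain ⟨i, ⟨_, hi⟩, rfl⟩ := hk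
    exact Finset.mem_range.mpr hi
  have h4 : ∑ k ∈ (Finset.univ.filter (fun i : Fin n => i.val < 4)).image Fin.val, 2 ^ k
      ≤ ∑ k ∈ Finset.range 4, 2 ^ k :=
    Finset.sum_le_sum_of_subset h3
  have h5 : ∑ k ∈ Finset.range 4, 2 ^ k = 15 := by decide
  omega

lemma card_lt_of_high_zero {n : ℕ} (c : Deck n) (h : ∀ i : Fin n, 4 ≤ i.val → c i = 0) :
    cardToNat c < 16 := by
  have : cardToNat c = ∑ i ∈ Finset.univ.filter (fun i : Fin n => i.val < 4),
      (c i).val * 2 ^ i.val := by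
    rw [cardToNat, ← Finset.sum_filter_add_sum_filter_not Finset.univ
      (fun i : Fin n => i.val < 4)]
    have : ∑ i ∈ Finset.univ.filter (fun i : Fin n => ¬ i.val < 4),
        (c i).val * 2 ^ i.val = 0 := by
      apply Finset.sum_eq_zero
      intro i hi
      simp only [Finset.mem_filter] at hi
      rw [h i (Nat.not_lt.mp hi.2)]
      simp
    omega
  have := low_sum_le c
  omega

lemma high_zero_of_card_lt {n : ℕ} (c : Deck n) (h : cardToNat c < 16) :
    ∀ i : Fin n, 4 ≤ i.val → c i = 0 := by
  intro i hi
  by_contra hne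
  have hval : (c i).val = 1 := by
    have := zmod2_val_le_one (c i)
    have hz : (c i).val ≠ 0 := fun h0 => hne ((ZMod.val_eq_zero _).mp h0)
    omega
  have hle : (c i).val * 2 ^ i.val ≤ cardToNat c := by
    rw [cardToNat]
    exact Finset.single_le_sum (f := fun j : Fin n => (c j).val * 2 ^ j.val)
      (fun j _ => Nat.zero_le _) (Finset.mem_univ i)
  have h16 : (16 : ℕ) ≤ 2 ^ i.val := by
    calc (16 : ℕ) = 2 ^ 4 := by norm_num
      _ ≤ 2 ^ i.val := Nat.pow_le_pow_right (by norm_num) hi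
  rw [hval, one_mul] at hle
  omega

lemma dvd_of_low_zero {n : ℕ} (c : Deck n) (h : ∀ i : Fin n, i.val < 4 → c i = 0) :
    16 ∣ cardToNat c := by
  apply Finset.dvd_sum
  intro i _
  by_cases hi : i.val < 4
  · rw [h i hi]; simp
  · have : (16 : ℕ) ∣ 2 ^ i.val := by
      calc (16 : ℕ) = 2 ^ 4 := by norm_num
        _ ∣ 2 ^ i.val := pow_dvd_pow 2 (Nat.not_lt.mp hi)
    exact this.trans (dvd_mul_left _ _) |>.mul_left 1 |>.trans (by rw [one_mul])

lemma low_zero_of_dvd {n : ℕ} (c : Deck n) (h : 16 ∣ cardToNat c) :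
    ∀ i : Fin n, i.val < 4 → c i = 0 := by
  have hsplit : cardToNat c =
      (∑ i ∈ Finset.univ.filter (fun i : Fin n => i.val < 4), (c i).val * 2 ^ i.val) +
      (∑ i ∈ Finset.univ.filter (fun i : Fin n => ¬ i.val < 4), (c i).val * 2 ^ i.val) :=
    (Finset.sum_filter_add_sum_filter_not _ _ _).symm
  have hhigh : (16 : ℕ) ∣
      ∑ i ∈ Finset.univ.filter (fun i : Fin n => ¬ i.val < 4), (c i).val * 2 ^ i.val := by
    apply Finset.dvd_sum
    intro i hi
    simp only [Finset.mem_filter] at hi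
    have : (16 : ℕ) ∣ 2 ^ i.val := by
      calc (16 : ℕ) = 2 ^ 4 := by norm_num
        _ ∣ 2 ^ i.val := pow_dvd_pow 2 (Nat.not_lt.mp hi.2)
    exact this.mul_left _
  have hlow : (16 : ℕ) ∣
      ∑ i ∈ Finset.univ.filter (fun i : Fin n => i.val < 4), (c i).val * 2 ^ i.val := by
    rw [hsplit] at h
    exact (Nat.dvd_add_right hhigh).mp (by rwa [Nat.add_comm] at h)
  have hle := low_sum_le c
  have hz : ∑ i ∈ Finset.univ.filter (fun i : Fin n => i.val < 4), (c i).val * 2 ^ i.val = 0 :=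
    Nat.eq_zero_of_dvd_of_lt hlow (by omega)
  intro i hi
  have hmem : i ∈ Finset.univ.filter (fun i : Fin n => i.val < 4) :=
    Finset.mem_filter.mpr ⟨Finset.mem_univ i, hi⟩
  have := (Finset.sum_eq_zero_iff.mp hz) i hmem
  have hv : (c i).val = 0 := by
    have hpow : (0:ℕ) < 2 ^ i.val := by positivity
    rcases Nat.mul_eq_zero.mp this with h0 | h0
    · exact h0
    · omega
  exact (ZMod.val_eq_zero _).mp hv

lemma numToCard_high_zero (n k : ℕ) (hk : k < 16) :
    ∀ i : Fin n, 4 ≤ i.val → numToCard n k i = 0 := by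
  intro i hi
  have : Nat.testBit k i.val = false := by
    apply Nat.testBit_lt_two_pow
    calc k < 16 := hk
      _ = 2 ^ 4 := by norm_num
      _ ≤ 2 ^ i.val := Nat.pow_le_pow_right (by norm_num) hi
  simp [numToCard, this]

theorem typeC_unique_decomposition (n : ℕ) (hn : 4 ≤ n)
    (C : Fin 4 × Fin 4 → Deck n)
    (hinj : Function.Injective C) (hsm : IsSemimagic C) (hC : IsTypeC C) :
    ∃! AB : (Fin 4 × Fin 4 → Deck n) × (Fin 4 × Fin 4 → Deck n),
      IsTypeA AB.1 ∧ IsTypeB AB.2 ∧ C = AB.1 + AB.2 := by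
  classical
  set A0 : Fin 4 × Fin 4 → Deck n := fun p i => if i.val < 4 then C p i else 0 with hA0def
  set B0 : Fin 4 × Fin 4 → Deck n := fun p i => if i.val < 4 then 0 else C p i with hB0def
  refine ⟨(A0, B0), ⟨?_, ?_, ?_⟩, ?_⟩
  · -- IsTypeA A0
    refine ⟨?_, ?_, ?_, ?_, ?_⟩
    · intro p
      apply card_lt_of_high_zero
      intro i hi
      simp [hA0def, Nat.not_lt.mpr hi]
    · intro j
      funext i
      by_cases hi : i.val < 4
      · simp only [hA0def, hi, if_true]
        rw [hC.1 j]
      · simp only [hA0def, hi, if_false]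
        exact (numToCard_high_zero n j.val (by omega) i (Nat.not_lt.mp hi)).symm
    · intro i
      funext k
      by_cases hk : k.val < 4
      · simp only [hA0def, hk, if_true]
        rw [hC.2 i]
      · simp only [hA0def, hk, if_false]
        exact (numToCard_high_zero n (4 * i.val) (by omega) k (Nat.not_lt.mp hk)).symm
    · intro i
      funext k
      simp only [Finset.sum_apply, hA0def, Pi.zero_apply]
      by_cases hk : k.val < 4
      · simp only [hk, if_true]
        have := congrFun (hsm.1 i) k
        simpa [Finset.sum_apply] using this
      · simp [hk]
    · intro j
      funext k
      simp only [Finset.sum_apply, hA0def, Pi.zero_apply]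
      by_cases hk : k.val < 4
      · simp only [hk, if_true]
        have := congrFun (hsm.2 j) k
        simpa [Finset.sum_apply] using this
      · simp [hk]
  · -- IsTypeB B0
    refine ⟨?_, ?_, ?_, ?_, ?_⟩
    · intro p
      apply dvd_of_low_zero
      intro i hi
      simp [hB0def, hi]
    · intro j
      funext i
      by_cases hi : i.val < 4
      · simp [hB0def, hi]
      · simp only [hB0def, hi, if_false, Pi.zero_apply]
        rw [hC.1 j]
        exact numToCard_high_zero n j.val (by omega) i (Nat.not_lt.mp hi)
    · intro i
      funext k
      by_cases hk : k.val < 4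
      · simp [hB0def, hk]
      · simp only [hB0def, hk, if_false, Pi.zero_apply]
        rw [hC.2 i]
        exact numToCard_high_zero n (4 * i.val) (by omega) k (Nat.not_lt.mp hk)
    · intro i
      funext k
      simp only [Finset.sum_apply, hB0def, Pi.zero_apply]
      by_cases hk : k.val < 4
      · simp [hk]
      · simp only [hk, if_false]
        have := congrFun (hsm.1 i) k
        simpa [Finset.sum_apply] using this
    · intro j
      funext k
      simp only [Finset.sum_apply, hB0def, Pi.zero_apply]
      by_cases hk : k.val < 4
      · simp [hk]
      · simp only [hk, if_false]
        have := congrFun (hsm.2 j) k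
        simpa [Finset.sum_apply] using this
  · -- C = A0 + B0
    funext p i
    show C p i = A0 p i + B0 p i
    by_cases hi : i.val < 4 <;> simp [hA0def, hB0def, hi]
  · rintro ⟨A, B⟩ ⟨hA, hB, hCe⟩
    have hBlow : ∀ p (i : Fin n), i.val < 4 → B p i = 0 :=
      fun p i hi => low_zero_of_dvd (B p) (hB.1 p) i hi
    have hAhigh : ∀ p (i : Fin n), 4 ≤ i.val → A p i = 0 :=
      fun p i hi => high_zero_of_card_lt (A p) (hA.1 p) i hi
    have hCp : ∀ p (i : Fin n), C p i = A p i + B p i := by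
      intro p i; rw [hCe]; rfl
    have hAe : A = A0 := by
      funext p i
      by_cases hi : i.val < 4
      · simp only [hA0def, hi, if_true]
        rw [hCp p i, hBlow p i hi, add_zero]
      · simp only [hA0def, hi, if_false]
        exact hAhigh p i (Nat.not_lt.mp hi)
    have hBe : B = B0 := by
      funext p i
      by_cases hi : i.val < 4
      · simp only [hB0def, hi, if_true]
        exact hBlow p i hi
      · simp only [hB0def, hi, if_false]
        rw [hCp p i, hAhigh p i (Nat.not_lt.mp hi), zero_add]
    rw [hAe, hBe]
end
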